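/- arXiv:2205.06923 — 3 statements merged into one kernel-verified Lean document; each statement's English description precedes it below -/
import Mathlib

section
/- Let Z be a centered Gaussian random vector in ℝ^d with nondegenerate covariance matrix Σ. Then for every Borel set V ⊆ ℝ^d and every vector v ∈ ℝ^d, P(Z ∈ v + V) ≥ 2^{−d/2} · exp(−vᵀ Σ^{−1} v) · P(Z ∈ √2·V), where √2·V = {√2 y : y ∈ V} and v + V = {v + y : y ∈ V}. -/
open MeasureTheory ProbabilityTheory Set
open scoped ENNReal NNReal Pointwise ProbabilityTheory

noncomputable section

/-- `W` is a standard one-dimensional Brownian motion: it starts at `0`, has a.s. continuous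
paths, Gaussian increments `W t - W s ∼ N(0, t - s)` and independent increments. -/
def IsStandardBM {Ω : Type*} [MeasureSpace Ω] (W : ℝ → Ω → ℝ) : Prop :=
  (∀ t : ℝ, Measurable (W t)) ∧
  (∀ᵐ ω ∂(ℙ : Measure Ω), W 0 ω = 0) ∧
  (∀ᵐ ω ∂(ℙ : Measure Ω), Continuous fun t => W t ω) ∧
  (∀ s t : ℝ, 0 ≤ s → s ≤ t →
    Measure.map (fun ω => W t ω - W s ω) ℙ = gaussianReal 0 (t - s).toNNReal) ∧
  (∀ n : ℕ, ∀ ts : Fin (n + 1) → ℝ, Monotone ts → 0 ≤ ts 0 →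
    iIndepFun
      (fun i : Fin n => fun ω => W (ts i.succ) ω - W (ts i.castSucc) ω) ℙ)

/-- `B` is a `d`-dimensional Brownian motion whose components are independent standard
one-dimensional Brownian motions. -/
def IsMultiBM {Ω : Type*} [MeasureSpace Ω] {d : ℕ} (B : ℝ → Ω → Fin d → ℝ) : Prop :=
  (∀ i : Fin d, IsStandardBM fun t ω => B t ω i) ∧
  iIndepFun (fun (i : Fin d) (ω : Ω) (t : ℝ) => B t ω i) ℙ

/-- The set `S` satisfies the cone condition with respect to the process `Z` with the (strictly
positive) function `ε`: for every `x ∈ S` there is a Borel set `V ⊆ S` containing `x`, not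
depending on `t`, with `V - x ⊆ C • (V - x)` for all `C > 1` and `P(Z t ∈ V - x) ≥ ε t` for all
`t > 0`. -/
def ConeCondition {Ω : Type*} [MeasureSpace Ω] {d : ℕ} (Z : ℝ → Ω → Fin d → ℝ)
    (S : Set (Fin d → ℝ)) (ε : ℝ → ℝ) : Prop :=
  (∀ t : ℝ, 0 < t → 0 < ε t) ∧
  ∀ x ∈ S, ∃ V : Set (Fin d → ℝ), MeasurableSet V ∧ V ⊆ S ∧ x ∈ V ∧
    (∀ C : ℝ, 1 < C → (fun v => v - x) '' V ⊆ C • ((fun v => v - x) '' V)) ∧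
    ∀ t : ℝ, 0 < t → ENNReal.ofReal (ε t) ≤ ℙ {ω | Z t ω + x ∈ V}

/-- `c : [0,∞) → ℝ^d` belongs to `RV_T(1/2)`: it is continuous and for some `M > 0`,
`|c_i(t) - c_i(T)| ≤ M |t - T|^{1/2}` for all `i` and all `t ∈ [0,T]`. -/
def MemRVhalf {d : ℕ} (c : ℝ → Fin d → ℝ) (T : ℝ) : Prop :=
  Continuous c ∧ ∃ M : ℝ, 0 < M ∧ ∀ i : Fin d, ∀ t ∈ Set.Icc (0 : ℝ) T,
    |c t i - c T i| ≤ M * |t - T| ^ ((1 : ℝ) / 2)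

/-- The quadratic form `q ↦ qᵀ M q`. -/
def quadForm {d : ℕ} (M : Matrix (Fin d) (Fin d) ℝ) (q : Fin d → ℝ) : ℝ :=
  dotProduct q (M.mulVec q)

/-- Covariance matrix of the Gaussian vector `(Z_1(v_1), …, Z_d(v_d))` where `Z = A B`:
`Σ(v)_{ij} = min(v_i, v_j) (A Aᵀ)_{ij}`.  In particular `covMat A (fun _ => T) = T • A Aᵀ`
is the covariance matrix of `Z(T)`. -/
def covMat {d : ℕ} (A : Matrix (Fin d) (Fin d) ℝ) (v : Fin d → ℝ) :
    Matrix (Fin d) (Fin d) ℝ :=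
  Matrix.of fun i j => min (v i) (v j) * (A * A.transpose) i j

/-- The constant `𝔠(T) = inf_{t ∈ [0,T)} exp(-T ((c(T)-c(t))/√(T-t))ᵀ Σ⁻¹ ((c(T)-c(t))/√(T-t)))`
where `Σ = T • A Aᵀ` is the covariance matrix of `Z(T)`. -/
def frakC {d : ℕ} (A : Matrix (Fin d) (Fin d) ℝ) (c : ℝ → Fin d → ℝ) (T : ℝ) : ℝ :=
  sInf ((fun t => Real.exp (-(T * quadForm (covMat A fun _ => T)⁻¹
    fun i => (c T i - c t i) / Real.sqrt (T - t)))) '' Set.Ico 0 T)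

section AuxQuad

open Matrix

variable {d : ℕ}

lemma quadForm_nonneg' {M : Matrix (Fin d) (Fin d) ℝ} (hM : M.PosSemidef) (x : Fin d → ℝ) :
    0 ≤ quadForm M x := by
  simpa [quadForm] using hM.dotProduct_mulVec_nonneg x

lemma dot_symm' {M : Matrix (Fin d) (Fin d) ℝ} (hM : M.IsHermitian) (x y : Fin d → ℝ) :
    dotProduct x (M.mulVec y) = dotProduct y (M.mulVec x) := by
  have hT : Mᵀ = M := by
    rw [← Matrix.conjTranspose_eq_transpose_of_trivial]; exact hM
  rw [Matrix.dotProduct_mulVec, ← Matrix.mulVec_transpose, hT, dotProduct_comm]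

lemma quadForm_add' {M : Matrix (Fin d) (Fin d) ℝ} (hM : M.IsHermitian) (x y : Fin d → ℝ) :
    quadForm M (x + y)
      = quadForm M x + 2 * dotProduct x (M.mulVec y) + quadForm M y := by
  simp only [quadForm, Matrix.mulVec_add, dotProduct_add, add_dotProduct]
  rw [dot_symm' hM y x]; ring

lemma quadForm_sub' {M : Matrix (Fin d) (Fin d) ℝ} (hM : M.IsHermitian) (x y : Fin d → ℝ) :
    quadForm M (x - y)
      = quadForm M x - 2 * dotProduct x (M.mulVec y) + quadForm M y := by
  simp only [quadForm, Matrix.mulVec_sub, dotProduct_sub, sub_dotProduct]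
  rw [dot_symm' hM y x]; ring

lemma quadForm_smul' (M : Matrix (Fin d) (Fin d) ℝ) (r : ℝ) (x : Fin d → ℝ) :
    quadForm M (r • x) = r ^ 2 * quadForm M x := by
  simp only [quadForm, Matrix.mulVec_smul, smul_dotProduct, dotProduct_smul,
    smul_eq_mul]
  ring

lemma continuous_quadForm' (M : Matrix (Fin d) (Fin d) ℝ) : Continuous (quadForm M) := by
  have h : quadForm M = fun x : Fin d → ℝ => ∑ i, x i * ∑ j, M i j * x j := by
    funext x
    simp [quadForm, dotProduct, Matrix.mulVec]
  rw [h]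
  exact continuous_finset_sum _ fun i _ =>
    (continuous_apply i).mul (continuous_finset_sum _ fun j _ =>
      continuous_const.mul (continuous_apply j))

end AuxQuad

/-- For a centered Gaussian vector `Z ∼ N(0, Σ)` in `ℝ^d` with nondegenerate covariance `Σ`
(expressed through its Lebesgue density), for every Borel `V` and every `v ∈ ℝ^d`,
`P(Z ∈ v + V) ≥ 2^{-d/2} exp(-vᵀ Σ⁻¹ v) P(Z ∈ √2 V)`. -/
theorem stmt_9 {Ω : Type*} [MeasureSpace Ω] [IsProbabilityMeasure (ℙ : Measure Ω)]
    {d : ℕ} (Sig : Matrix (Fin d) (Fin d) ℝ) (hSig : Sig.PosDef)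
    (Zv : Ω → Fin d → ℝ) (hZmeas : Measurable Zv)
    (hZ : Measure.map Zv ℙ = volume.withDensity fun x : Fin d → ℝ =>
      ENNReal.ofReal ((2 * Real.pi) ^ (-(d : ℝ) / 2) * Sig.det ^ (-(1 : ℝ) / 2) *
        Real.exp (-quadForm Sig⁻¹ x / 2)))
    (V : Set (Fin d → ℝ)) (hV : MeasurableSet V) (v : Fin d → ℝ) :
    ENNReal.ofReal ((2 : ℝ) ^ (-(d : ℝ) / 2) * Real.exp (-quadForm Sig⁻¹ v)) *
        ℙ {ω | Zv ω ∈ Real.sqrt 2 • V} ≤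
      ℙ {ω | Zv ω ∈ v +ᵥ V} := by
  classical
  set c : ℝ := (2 * Real.pi) ^ (-(d : ℝ) / 2) * Sig.det ^ (-(1 : ℝ) / 2) with hc_def
  set f : (Fin d → ℝ) → ℝ≥0∞ :=
    fun x => ENNReal.ofReal (c * Real.exp (-quadForm Sig⁻¹ x / 2)) with hf_def
  have hSigInv : (Sig⁻¹).PosDef := hSig.inv
  have hq0 : ∀ x, 0 ≤ quadForm Sig⁻¹ x := quadForm_nonneg' hSigInv.posSemidef
  have hc0 : 0 ≤ c := by
    have h1 : (0:ℝ) < 2 * Real.pi := by positivity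
    have h2 : (0:ℝ) < Sig.det := hSig.det_pos
    positivity
  have hfmeas : Measurable f := by
    apply Measurable.ennreal_ofReal
    exact (continuous_const.mul
      ((continuous_quadForm' Sig⁻¹).neg.div_const 2).rexp).measurable
  have hs2 : Real.sqrt 2 ≠ 0 := by positivity
  have hVs : MeasurableSet (Real.sqrt 2 • V) := hV.const_smul_of_ne_zero hs2
  have hVv : MeasurableSet (v +ᵥ V) := hV.const_vadd v
  -- probabilities as integrals of the density
  have hprob : ∀ S : Set (Fin d → ℝ), MeasurableSet S →
      ℙ {ω | Zv ω ∈ S} = ∫⁻ x in S, f x := by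
    intro S hS
    have h1 : {ω | Zv ω ∈ S} = Zv ⁻¹' S := rfl
    rw [h1, ← Measure.map_apply hZmeas hS, hZ, withDensity_apply _ hS]
  -- translation change of variables
  have htrans : ∫⁻ y in V, f (v + y) = ∫⁻ x in v +ᵥ V, f x := by
    have mp : MeasurePreserving (fun y : Fin d → ℝ => v + y) volume volume :=
      measurePreserving_add_left volume v
    have emb : MeasurableEmbedding (fun y : Fin d → ℝ => v + y) :=
      (MeasurableEquiv.addLeft v).measurableEmbedding
    have him : (fun y : Fin d → ℝ => v + y) '' V = v +ᵥ V := rfl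
    rw [← him]
    exact mp.setLIntegral_comp_emb emb f V
  -- scaling change of variables
  have hs_pos : (0:ℝ) < Real.sqrt 2 ^ d := by positivity
  have hmap : Measure.map (Real.sqrt 2 • ·) (volume : Measure (Fin d → ℝ))
      = ENNReal.ofReal ((Real.sqrt 2 ^ d)⁻¹) • volume := by
    rw [Measure.map_addHaar_smul volume hs2]
    congr 2
    rw [Module.finrank_fintype_fun_eq_card, Fintype.card_fin, abs_inv,
      abs_of_nonneg hs_pos.le]
  have hscale : ∫⁻ y in V, f (Real.sqrt 2 • y)
      = ENNReal.ofReal ((Real.sqrt 2 ^ d)⁻¹) * ∫⁻ x in Real.sqrt 2 • V, f x := by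
    have hpre : (Real.sqrt 2 • ·) ⁻¹' (Real.sqrt 2 • V) = V := by
      rw [← Set.image_smul]
      exact Set.preimage_image_eq V (smul_right_injective (Fin d → ℝ) hs2)
    calc ∫⁻ y in V, f (Real.sqrt 2 • y)
        = ∫⁻ x in Real.sqrt 2 • V, f x
            ∂(Measure.map (Real.sqrt 2 • ·) volume) := by
          rw [setLIntegral_map hVs hfmeas (measurable_const_smul _), hpre]
      _ = ENNReal.ofReal ((Real.sqrt 2 ^ d)⁻¹) * ∫⁻ x in Real.sqrt 2 • V, f x := by
          rw [hmap, Measure.restrict_smul, lintegral_smul_measure, smul_eq_mul]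
  have hscale' : ∫⁻ x in Real.sqrt 2 • V, f x
      = ENNReal.ofReal (Real.sqrt 2 ^ d) * ∫⁻ y in V, f (Real.sqrt 2 • y) := by
    rw [hscale, ← mul_assoc, ← ENNReal.ofReal_mul hs_pos.le,
      mul_inv_cancel₀ hs_pos.ne', ENNReal.ofReal_one, one_mul]
  -- rewrite probabilities
  rw [hprob _ hVs, hprob _ hVv, ← htrans, hscale', ← mul_assoc,
    ← ENNReal.ofReal_mul (by positivity)]
  -- the constant simplifies
  have hconst : (2 : ℝ) ^ (-(d : ℝ) / 2) * Real.exp (-quadForm Sig⁻¹ v) * Real.sqrt 2 ^ d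
      = Real.exp (-quadForm Sig⁻¹ v) := by
    have h1 : (Real.sqrt 2 : ℝ) ^ d = (2:ℝ) ^ ((d : ℝ) / 2) := by
      rw [Real.sqrt_eq_rpow, ← Real.rpow_natCast ((2:ℝ) ^ ((1:ℝ)/2)) d,
        ← Real.rpow_mul (by norm_num)]
      norm_num
      ring_nf
    rw [h1, mul_comm ((2:ℝ) ^ (-(d : ℝ) / 2)) _, mul_assoc,
      ← Real.rpow_add (by norm_num : (0:ℝ) < 2)]
    rw [show -(d:ℝ)/2 + (d:ℝ)/2 = 0 by ring, Real.rpow_zero, mul_one]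
  rw [hconst]
  -- pointwise inequality and monotonicity of the integral
  rw [← lintegral_const_mul' _ _ ENNReal.ofReal_ne_top]
  refine setLIntegral_mono' hV fun y _ => ?_
  have hqs : quadForm Sig⁻¹ (Real.sqrt 2 • y) = 2 * quadForm Sig⁻¹ y := by
    rw [quadForm_smul', Real.sq_sqrt (by norm_num : (0:ℝ) ≤ 2)]
  have hherm : (Sig⁻¹).IsHermitian := hSigInv.isHermitian
  have hcross : 2 * dotProduct v ((Sig⁻¹).mulVec y)
      ≤ quadForm Sig⁻¹ v + quadForm Sig⁻¹ y := by
    have h := hq0 (v - y)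
    rw [quadForm_sub' hherm] at h
    linarith
  have hreal : Real.exp (-quadForm Sig⁻¹ v) * (c * Real.exp (-(2 * quadForm Sig⁻¹ y) / 2))
      ≤ c * Real.exp (-quadForm Sig⁻¹ (v + y) / 2) := by
    rw [quadForm_add' hherm]
    rw [mul_comm (Real.exp _) _, mul_assoc, ← Real.exp_add]
    apply mul_le_mul_of_nonneg_left _ hc0
    apply Real.exp_le_exp.mpr
    linarith
  calc ENNReal.ofReal (Real.exp (-quadForm Sig⁻¹ v)) * f (Real.sqrt 2 • y)
      = ENNReal.ofReal (Real.exp (-quadForm Sig⁻¹ v)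
          * (c * Real.exp (-(2 * quadForm Sig⁻¹ y) / 2))) := by
        simp only [hf_def, hqs, ← ENNReal.ofReal_mul (Real.exp_nonneg _)]
    _ ≤ f (v + y) := ENNReal.ofReal_le_ofReal hreal

end
end

section
/- Let W be a standard one-dimensional Brownian motion, let λ ≥ 0 and β ∈ [1/2, 1]. Then there exists a constant C > 0, not depending on u, such that for every u > 1, P(∃ t ∈ [0,1] : W(t) − λ t^β ≥ u) ≤ C · P(W(1) − λ ≥ u). -/
open MeasureTheory ProbabilityTheory Set
open scoped ENNReal NNReal Pointwise ProbabilityTheory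

noncomputable section

lemma gauss_pos (lam : ℝ) : 0 < gaussianReal 0 1 (Set.Ici lam) := by
  by_contra h
  push_neg at h
  have h0 : gaussianReal 0 1 (Set.Ici lam) = 0 := le_antisymm h zero_le
  have := gaussianReal_absolutelyContinuous' 0 (v := 1) one_ne_zero h0
  simp [Real.volume_Ici] at this

lemma gauss_tail (lam : ℝ) (hlam : 0 ≤ lam) (v : ℝ) (hv0 : 0 ≤ v) (hv1 : v ≤ 1) :
    gaussianReal 0 1 (Set.Ici lam) ≤ gaussianReal 0 v.toNNReal (Set.Ici (lam * v)) := by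
  set s := Real.sqrt v with hs
  have hs0 : 0 ≤ s := Real.sqrt_nonneg v
  have hs1 : s ≤ 1 := by
    rw [hs, show (1:ℝ) = Real.sqrt 1 by simp]
    exact Real.sqrt_le_sqrt hv1
  have hmap : (gaussianReal 0 1).map (s * ·) = gaussianReal 0 v.toNNReal := by
    rw [gaussianReal_map_const_mul s]
    congr 1
    · ring
    · ext
      simp [hs, Real.sq_sqrt hv0, Real.coe_toNNReal v hv0]
  have happ : gaussianReal 0 v.toNNReal (Set.Ici (lam * v))
      = gaussianReal 0 1 ((s * ·) ⁻¹' Set.Ici (lam * v)) := by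
    rw [← hmap, Measure.map_apply (measurable_id'.const_mul s) measurableSet_Ici]
  rw [happ]
  refine measure_mono fun x hx => ?_
  simp only [Set.mem_preimage, Set.mem_Ici] at *
  have h1 : lam * v = s * (s * lam) := by
    rw [← mul_assoc, Real.mul_self_sqrt hv0]; ring
  rw [h1]
  have h2 : s * lam ≤ lam := by nlinarith
  have h3 : s * lam ≤ x := h2.trans hx
  nlinarith

lemma le_rpow_self {x β : ℝ} (hx0 : 0 ≤ x) (hx1 : x ≤ 1) (hβ0 : 0 < β) (hβ1 : β ≤ 1) :
    x ≤ x ^ β := by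
  rcases eq_or_lt_of_le hx0 with h | h
  · rw [← h, Real.zero_rpow hβ0.ne']
  · calc x = x ^ (1:ℝ) := (Real.rpow_one x).symm
    _ ≤ x ^ β := Real.rpow_le_rpow_of_exponent_ge h hx1 hβ1

lemma discrete_bound {Ω : Type*} [MeasureSpace Ω] [IsProbabilityMeasure (ℙ : Measure Ω)]
    (W : ℝ → Ω → ℝ) (hW : IsStandardBM W)
    (lam : ℝ) (hlam : 0 ≤ lam) (β : ℝ) (hβ : β ∈ Set.Icc (1 / 2 : ℝ) 1)
    (n : ℕ) (hn : 1 ≤ n) (u' : ℝ) (hu' : 0 < u') :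
    gaussianReal 0 1 (Set.Ici lam) *
      ℙ {ω | ∃ k ≤ n, u' + lam * ((k : ℝ) / (n : ℝ)) ^ β ≤ W ((k : ℝ) / (n : ℝ)) ω - W 0 ω} ≤
      ℙ {ω | u' + lam ≤ W 1 ω - W 0 ω} := by
  classical
  obtain ⟨hWm, hW0, hWc, hWg, hWi⟩ := hW
  set ε₀ : ℝ≥0∞ := gaussianReal 0 1 (Set.Ici lam) with hε₀
  have hβ0 : (0:ℝ) < β := lt_of_lt_of_le (by norm_num) hβ.1
  set ν : ℝ := (n : ℝ) with hν'
  have hν : 0 < ν := by rw [hν']; exact_mod_cast Nat.lt_of_lt_of_le Nat.zero_lt_one hn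
  set Pk : ℕ → Ω → Prop :=
    fun k ω => u' + lam * ((k : ℝ) / ν) ^ β ≤ W ((k : ℝ) / ν) ω - W 0 ω with hPk
  set B : ℕ → Set Ω :=
    fun k => {ω | Pk k ω} ∩ ⋂ (j : ℕ) (_ : j < k), {ω | Pk j ω}ᶜ with hB
  set C : ℕ → Set Ω :=
    fun k => {ω | lam * (1 - (k : ℝ) / ν) ≤ W 1 ω - W ((k : ℝ) / ν) ω} with hC
  have hPm : ∀ k, MeasurableSet {ω | Pk k ω} := fun k =>
    measurableSet_le measurable_const ((hWm _).sub (hWm _))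
  have hBm : ∀ k, MeasurableSet (B k) := fun k =>
    (hPm k).inter (MeasurableSet.iInter fun j => MeasurableSet.iInter fun _ => (hPm j).compl)
  have hCm : ∀ k, MeasurableSet (C k) := fun k =>
    measurableSet_le measurable_const ((hWm _).sub (hWm _))
  have hfrac0 : ∀ k : ℕ, (0:ℝ) ≤ (k : ℝ) / ν := fun k => div_nonneg (Nat.cast_nonneg k) hν.le
  have hfrac1 : ∀ k : ℕ, k ≤ n → (k : ℝ) / ν ≤ 1 := fun k hk =>
    (div_le_one hν).mpr (by rw [hν']; exact_mod_cast hk)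
  -- B 0 is empty
  have hB0 : B 0 = ∅ := by
    ext ω
    simp only [hB, Set.mem_inter_iff, Set.mem_setOf_eq, Set.mem_empty_iff_false, iff_false,
      not_and]
    intro h _
    rw [hPk] at h
    simp only [Nat.cast_zero, zero_div, sub_self] at h
    rw [Real.zero_rpow hβ0.ne'] at h
    linarith
  -- disjointness
  have hdisj' : ∀ {a b : ℕ}, a < b → Disjoint (B a) (B b) := by
    intro a b hab
    refine Set.disjoint_left.mpr fun ω ha hb => ?_
    have h1 : Pk a ω := ha.1
    have h2 : ω ∈ ⋂ (j : ℕ) (_ : j < b), {ω | Pk j ω}ᶜ := hb.2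
    simp only [Set.mem_iInter, Set.mem_compl_iff, Set.mem_setOf_eq] at h2
    exact h2 a hab h1
  have hdisj : Set.PairwiseDisjoint ↑(Finset.range (n+1)) B := by
    intro a _ b _ hab
    rcases lt_or_gt_of_ne hab with h | h
    · exact hdisj' h
    · exact (hdisj' h).symm
  -- covering
  have hcover : {ω | ∃ k ≤ n, u' + lam * ((k : ℝ) / ν) ^ β ≤ W ((k : ℝ) / ν) ω - W 0 ω}
      ⊆ ⋃ k ∈ Finset.range (n+1), B k := by
    rintro ω ⟨k, hk, hPkω⟩
    have hex : ∃ m, Pk m ω := ⟨k, hPkω⟩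
    refine Set.mem_biUnion (x := Nat.find hex) ?_ ?_
    · have := Nat.find_min' hex hPkω
      exact Finset.mem_coe.mpr (Finset.mem_range.mpr (by omega))
    · refine ⟨Nat.find_spec hex, ?_⟩
      simp only [Set.mem_iInter, Set.mem_compl_iff, Set.mem_setOf_eq]
      exact fun j hj => Nat.find_min hex hj
  -- inclusion into the target
  have hincl : ∀ k ≤ n, B k ∩ C k ⊆ {ω | u' + lam ≤ W 1 ω - W 0 ω} := by
    intro k hk ω hω
    obtain ⟨hωB, hωC⟩ := hω
    have h1 : Pk k ω := hωB.1
    rw [hPk] at h1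
    have h2 : lam * (1 - (k:ℝ)/ν) ≤ W 1 ω - W ((k:ℝ)/ν) ω := hωC
    have hx : (k:ℝ)/ν ≤ ((k:ℝ)/ν) ^ β := le_rpow_self (hfrac0 k) (hfrac1 k hk) hβ0 hβ.2
    have h3 := mul_le_mul_of_nonneg_left hx hlam
    simp only [Set.mem_setOf_eq]
    nlinarith [h1, h2, h3]
  -- gaussian tail bound for C k
  have hCtail : ∀ k ≤ n, ε₀ ≤ ℙ (C k) := by
    intro k hk
    have hCpre : C k = (fun ω => W 1 ω - W ((k:ℝ)/ν) ω) ⁻¹' Set.Ici (lam * (1 - (k:ℝ)/ν)) := by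
      ext ω; simp [hC, Set.mem_Ici]
    have hmapC : ℙ (C k) = gaussianReal 0 (1 - (k:ℝ)/ν).toNNReal
        (Set.Ici (lam * (1 - (k:ℝ)/ν))) := by
      rw [hCpre, ← hWg ((k:ℝ)/ν) 1 (hfrac0 k) (hfrac1 k hk),
        Measure.map_apply (f := fun ω => W 1 ω - W ((k:ℝ)/ν) ω) ((hWm 1).sub (hWm _)) measurableSet_Ici]
    rw [hmapC]
    exact gauss_tail lam hlam _ (by linarith [hfrac1 k hk]) (by linarith [hfrac0 k])
  -- independence step
  have hkey : ∀ k, 1 ≤ k → k ≤ n → ℙ (B k ∩ C k) = ℙ (B k) * ℙ (C k) := by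
    intro k hk1 hkn
    set ts : Fin (k+2) → ℝ := fun i => if (i:ℕ) ≤ k then ((i:ℕ):ℝ)/ν else 1 with hts
    have hts_mono : Monotone ts := by
      intro i j hij
      have hij' : (i:ℕ) ≤ (j:ℕ) := hij
      by_cases hi : (i:ℕ) ≤ k <;> by_cases hj : (j:ℕ) ≤ k
      · simp only [hts, if_pos hi, if_pos hj]
        gcongr
      · simp only [hts, if_pos hi, if_neg hj]
        rw [div_le_one hν, hν']
        exact_mod_cast hi.trans hkn
      · omega
      · simp [hts, if_neg hi, if_neg hj]
    have hts0 : 0 ≤ ts 0 := by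
      have h00 : ((0 : Fin (k+2)) : ℕ) = 0 := rfl
      simp [hts, h00]
    have hInd := hWi (k+1) ts hts_mono hts0
    have hcastval : ∀ i : Fin (k+1), ts i.castSucc = ((i:ℕ):ℝ)/ν := by
      intro i
      have h1 : ((i.castSucc : Fin (k+2)) : ℕ) = (i:ℕ) := rfl
      rw [hts]
      simp only [h1]
      rw [if_pos (Nat.lt_succ_iff.mp i.isLt)]
    have hsuccval : ∀ i : Fin (k+1), (i:ℕ) < k → ts i.succ = (((i:ℕ)+1:ℕ):ℝ)/ν := by
      intro i hi
      have h1 : ((i.succ : Fin (k+2)) : ℕ) = (i:ℕ)+1 := rfl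
      rw [hts]
      simp only [h1]
      rw [if_pos (by omega)]
    have hlastval : ts (Fin.last k).succ = 1 := by
      have h1 : (((Fin.last k).succ : Fin (k+2)) : ℕ) = k+1 := by simp
      rw [hts]
      simp only [h1]
      rw [if_neg (by omega)]
    set S : Finset (Fin (k+1)) := Finset.Iio (Fin.last k) with hS
    set T : Finset (Fin (k+1)) := {Fin.last k} with hT
    have hST : Disjoint S T := by
      simp only [hS, hT, Finset.disjoint_singleton_right, Finset.mem_Iio]
      exact lt_irrefl _
    have hIF := hInd.indepFun_finset S T hST (fun i => (hWm _).sub (hWm _))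
    have hsum : ∀ j ≤ k, ∀ ω : Ω,
        (∑ i ∈ Finset.univ.filter (fun i : ↥S => ((i : Fin (k+1)) : ℕ) < j),
          (W (ts (i : Fin (k+1)).succ) ω - W (ts (i : Fin (k+1)).castSucc) ω))
        = W ((j:ℝ)/ν) ω - W 0 ω := by
      intro j hj ω
      have hmemS : ∀ a : ↥S, ((a : Fin (k+1)) : ℕ) < k := by
        intro a
        have := Finset.mem_Iio.mp a.2
        simpa [Fin.lt_def] using this
      have step1 : (∑ i ∈ Finset.univ.filter (fun i : ↥S => ((i : Fin (k+1)) : ℕ) < j),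
          (W (ts (i : Fin (k+1)).succ) ω - W (ts (i : Fin (k+1)).castSucc) ω))
          = ∑ m ∈ Finset.range j,
            (W (((m+1:ℕ):ℝ)/ν) ω - W (((m:ℕ):ℝ)/ν) ω) := by
        refine Finset.sum_bij' (i := fun a _ => ((a : Fin (k+1)) : ℕ))
          (j := fun m hm => ⟨⟨m, by simp only [Finset.mem_range] at hm; omega⟩, by
            simp only [hS, Finset.mem_Iio, Fin.lt_def, Fin.val_last]
            simp only [Finset.mem_range] at hm
            omega⟩)
          ?_ ?_ ?_ ?_ ?_
        · intro a ha
          simp only [Finset.mem_filter] at ha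
          simp only [Finset.mem_range]
          exact ha.2
        · intro m hm
          simp only [Finset.mem_filter, Finset.mem_univ, true_and]
          exact Finset.mem_range.mp hm
        · intro a ha
          apply Subtype.ext
          apply Fin.ext
          rfl
        · intro m hm
          rfl
        · intro a ha
          rw [hsuccval _ (hmemS a), hcastval]
      rw [step1, Finset.sum_range_sub (f := fun m : ℕ => W ((m:ℝ)/ν) ω) j]
      norm_num
    set ES : Set (↥S → ℝ) :=
      {y | u' + lam * ((k:ℝ)/ν)^β ≤
          ∑ i ∈ Finset.univ.filter (fun i : ↥S => ((i : Fin (k+1)) : ℕ) < k), y i} ∩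
        ⋂ (j : ℕ) (_ : j < k), {y | u' + lam * ((j:ℝ)/ν)^β ≤
          ∑ i ∈ Finset.univ.filter (fun i : ↥S => ((i : Fin (k+1)) : ℕ) < j), y i}ᶜ with hES'
    have hsum_meas : ∀ j : ℕ, Measurable (fun y : ↥S → ℝ =>
        ∑ i ∈ Finset.univ.filter (fun i : ↥S => ((i : Fin (k+1)) : ℕ) < j), y i) :=
      fun j => Finset.measurable_sum _ (fun i _ => measurable_pi_apply i)
    have hES : MeasurableSet ES :=
      (measurableSet_le measurable_const (hsum_meas k)).inter
        (MeasurableSet.iInter fun j => MeasurableSet.iInter fun _ =>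
          (measurableSet_le measurable_const (hsum_meas j)).compl)
    have hmemT : Fin.last k ∈ T := Finset.mem_singleton_self _
    set ET : Set (↥T → ℝ) := {z | lam * (1 - (k:ℝ)/ν) ≤ z ⟨Fin.last k, hmemT⟩} with hET'
    have hET : MeasurableSet ET := measurableSet_le measurable_const (measurable_pi_apply _)
    have hBpre : B k = (fun ω (i : ↥S) =>
        W (ts (i : Fin (k+1)).succ) ω - W (ts (i : Fin (k+1)).castSucc) ω) ⁻¹' ES := by
      ext ω
      simp only [hB, hPk, Set.mem_inter_iff, Set.mem_setOf_eq, Set.mem_iInter,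
        Set.mem_compl_iff, Set.mem_preimage, hES']
      rw [hsum k le_rfl ω]
      constructor
      · rintro ⟨h1, h2⟩
        refine ⟨h1, fun j hj => ?_⟩
        rw [hsum j hj.le ω]
        exact h2 j hj
      · rintro ⟨h1, h2⟩
        refine ⟨h1, fun j hj => ?_⟩
        have := h2 j hj
        rw [hsum j hj.le ω] at this
        exact this
    have hCpre : C k = (fun ω (i : ↥T) =>
        W (ts (i : Fin (k+1)).succ) ω - W (ts (i : Fin (k+1)).castSucc) ω) ⁻¹' ET := by
      ext ω
      simp only [hC, Set.mem_setOf_eq, Set.mem_preimage, hET']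
      rw [hlastval, hcastval (Fin.last k)]
      simp
    rw [hBpre, hCpre]
    exact hIF.measure_inter_preimage_eq_mul ES ET hES hET
  -- assembly
  calc ε₀ * ℙ {ω | ∃ k ≤ n, u' + lam * ((k : ℝ) / ν) ^ β ≤ W ((k : ℝ) / ν) ω - W 0 ω}
      ≤ ε₀ * ℙ (⋃ k ∈ Finset.range (n+1), B k) := mul_le_mul_right (measure_mono hcover) ε₀
    _ = ε₀ * ∑ k ∈ Finset.range (n+1), ℙ (B k) := by
        rw [measure_biUnion_finset hdisj (fun k _ => hBm k)]
    _ = ∑ k ∈ Finset.range (n+1), ε₀ * ℙ (B k) := Finset.mul_sum _ _ _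
    _ ≤ ∑ k ∈ Finset.range (n+1), ℙ (B k ∩ C k) := by
        refine Finset.sum_le_sum fun k hk => ?_
        rcases Nat.eq_zero_or_pos k with rfl | hk1
        · simp [hB0]
        · have hkn : k ≤ n := by have := Finset.mem_range.mp hk; omega
          rw [hkey k hk1 hkn, mul_comm (ℙ (B k))]
          exact mul_le_mul_left (hCtail k hkn) _
    _ = ℙ (⋃ k ∈ Finset.range (n+1), B k ∩ C k) := by
        rw [measure_biUnion_finset (hdisj.mono (fun k => Set.inter_subset_left))
          (fun k _ => (hBm k).inter (hCm k))]
    _ ≤ ℙ {ω | u' + lam ≤ W 1 ω - W 0 ω} := by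
        refine measure_mono (Set.iUnion₂_subset fun k hk => ?_)
        exact hincl k (by have := Finset.mem_range.mp hk; omega)

/-- **Section 2.2 (fractional Brownian motion, one dimension).** For a standard Brownian
motion `W`, `λ ≥ 0` and `β ∈ [1/2, 1]`, there is a constant `C > 0` not depending on `u` such
that for all `u > 1`,
`P(∃ t ∈ [0,1] : W(t) - λ t^β ≥ u) ≤ C P(W(1) - λ ≥ u)`. -/
theorem stmt_12 {Ω : Type*} [MeasureSpace Ω] [IsProbabilityMeasure (ℙ : Measure Ω)]
    (W : ℝ → Ω → ℝ) (hW : IsStandardBM W)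
    (lam : ℝ) (hlam : 0 ≤ lam) (β : ℝ) (hβ : β ∈ Set.Icc (1 / 2 : ℝ) 1) :
    ∃ C : ℝ, 0 < C ∧ ∀ u : ℝ, 1 < u →
      ℙ {ω | ∃ t ∈ Set.Icc (0 : ℝ) 1, u ≤ W t ω - lam * t ^ β} ≤
        ENNReal.ofReal C * ℙ {ω | u ≤ W 1 ω - lam} := by
  classical
  have hWm := hW.1
  have hW0 := hW.2.1
  have hWc := hW.2.2.1
  have hβ0 : (0:ℝ) < β := lt_of_lt_of_le (by norm_num) hβ.1
  set ε₀ : ℝ≥0∞ := gaussianReal 0 1 (Set.Ici lam) with hε₀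
  have hε₀pos : 0 < ε₀ := gauss_pos lam
  have hε₀top : ε₀ ≠ ⊤ := (lt_of_le_of_lt prob_le_one (by norm_num)).ne
  have htoReal : 0 < ε₀.toReal := ENNReal.toReal_pos hε₀pos.ne' hε₀top
  refine ⟨ε₀.toReal⁻¹, inv_pos.mpr htoReal, ?_⟩
  have hCof : ENNReal.ofReal ε₀.toReal⁻¹ = ε₀⁻¹ := by
    rw [ENNReal.ofReal_inv_of_pos htoReal, ENNReal.ofReal_toReal hε₀top]
  intro u hu
  rw [hCof]
  -- per-j bound
  have main : ∀ j : ℕ, ℙ {ω | ∃ t ∈ Set.Icc (0:ℝ) 1, u ≤ W t ω - lam * t^β}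
      ≤ ε₀⁻¹ * ℙ {ω | u - 1/((j:ℝ)+1) ≤ W 1 ω - lam} := by
    intro j
    set u' : ℝ := u - 1/((j:ℝ)+1) with hu'
    have hj0 : (0:ℝ) ≤ (j:ℝ) := Nat.cast_nonneg j
    have hu'pos : 0 < u' := by
      have h1 : 1/((j:ℝ)+1) ≤ 1 := by
        rw [div_le_one (by positivity)]
        linarith
      rw [hu']
      linarith
    set A : ℕ → Set Ω := fun m => {ω | ∃ k : ℕ, k ≤ 2^m ∧
      u' + lam * ((k:ℝ)/((2^m : ℕ):ℝ))^β ≤ W ((k:ℝ)/((2^m : ℕ):ℝ)) ω - W 0 ω} with hA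
    have hAmono : Monotone A := by
      refine monotone_nat_of_le_succ fun m => ?_
      rintro ω ⟨k, hk, hkω⟩
      refine ⟨2*k, by rw [pow_succ]; omega, ?_⟩
      have hcast : ((2*k:ℕ):ℝ)/((2^(m+1):ℕ):ℝ) = (k:ℝ)/((2^m:ℕ):ℝ) := by
        push_cast
        rw [pow_succ]
        have h2m : ((2:ℝ)^m) ≠ 0 := by positivity
        field_simp
      rw [hcast]
      exact hkω
    have hsub : {ω | ∃ t ∈ Set.Icc (0:ℝ) 1, u ≤ W t ω - lam * t^β} ≤ᵐ[ℙ] ⋃ m, A m := by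
      filter_upwards [hW0, hWc] with ω h0 hc
      intro hE
      obtain ⟨t₀, ht₀, hft⟩ := hE
      have hcf : ContinuousAt (fun t : ℝ => W t ω - lam * t^β) t₀ := by
        have h1 : ContinuousAt (fun t => W t ω) t₀ := hc.continuousAt
        have h2 : ContinuousAt (fun t : ℝ => t ^ β) t₀ :=
          Real.continuousAt_rpow_const t₀ β (Or.inr hβ0.le)
        exact h1.sub (continuousAt_const.mul h2)
      have hε : (0:ℝ) < 1/((j:ℝ)+1) := by positivity
      obtain ⟨δ, hδpos, hδ⟩ := Metric.continuousAt_iff.mp hcf (1/((j:ℝ)+1)) hε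
      obtain ⟨m, hm⟩ := pow_unbounded_of_one_lt (δ⁻¹) (one_lt_two (α := ℝ))
      have h2m : (0:ℝ) < 2^m := by positivity
      have hδ2 : 1/(2:ℝ)^m < δ := by
        rw [div_lt_iff₀ h2m]
        have h1 := mul_lt_mul_of_pos_left hm hδpos
        rw [mul_inv_cancel₀ hδpos.ne'] at h1
        linarith
      set k : ℕ := ⌊t₀ * 2^m⌋₊ with hk
      have ht₀0 : 0 ≤ t₀ := ht₀.1
      have ht₀1 : t₀ ≤ 1 := ht₀.2
      have hkle : (k:ℝ) ≤ t₀ * 2^m := Nat.floor_le (by positivity)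
      have hklt : t₀ * 2^m < (k:ℝ) + 1 := Nat.lt_floor_add_one _
      have hk2m : k ≤ 2^m := by
        have h' : (k:ℝ) ≤ ((2^m : ℕ):ℝ) := by
          push_cast
          nlinarith
        exact_mod_cast h'
      refine Set.mem_iUnion.mpr ⟨m, k, hk2m, ?_⟩
      have hcast : ((2^m : ℕ):ℝ) = (2:ℝ)^m := by push_cast; ring
      rw [h0, hcast, sub_zero]
      have hxe : (k:ℝ)/(2:ℝ)^m * 2^m = (k:ℝ) := div_mul_cancel₀ _ h2m.ne'
      have hdist : dist ((k:ℝ)/(2:ℝ)^m) t₀ < δ := by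
        rw [Real.dist_eq, abs_lt]
        have e1 : (t₀ - (k:ℝ)/2^m) * 2^m = t₀*2^m - (k:ℝ) := by rw [sub_mul, hxe]
        have e2 : ((k:ℝ)/2^m - t₀) * 2^m = (k:ℝ) - t₀*2^m := by rw [sub_mul, hxe]
        have hA1 : 1 < δ * 2^m := by
          rw [div_lt_iff₀ h2m] at hδ2
          linarith
        constructor
        · nlinarith [e2, hklt, hA1, h2m]
        · nlinarith [e2, hkle, h2m, mul_pos hδpos h2m]
      have hclose := hδ hdist
      rw [Real.dist_eq, abs_lt] at hclose
      have hlow := hclose.1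
      rw [hu']
      linarith
    calc ℙ {ω | ∃ t ∈ Set.Icc (0:ℝ) 1, u ≤ W t ω - lam * t^β}
        ≤ ℙ (⋃ m, A m) := measure_mono_ae hsub
      _ = ⨆ m, ℙ (A m) := hAmono.directed_le.measure_iUnion
      _ ≤ ε₀⁻¹ * ℙ {ω | u' + lam ≤ W 1 ω - W 0 ω} := by
          refine iSup_le fun m => ?_
          have hd := discrete_bound W hW lam hlam β hβ (2^m) Nat.one_le_two_pow u' hu'pos
          calc ℙ (A m) = ε₀⁻¹ * (ε₀ * ℙ (A m)) := by
                rw [← mul_assoc, ENNReal.inv_mul_cancel hε₀pos.ne' hε₀top, one_mul]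
            _ ≤ ε₀⁻¹ * ℙ {ω | u' + lam ≤ W 1 ω - W 0 ω} := mul_le_mul_right hd _
      _ = ε₀⁻¹ * ℙ {ω | u' ≤ W 1 ω - lam} := by
          congr 1
          apply measure_congr
          filter_upwards [hW0] with ω h0
          have hiff : (u' + lam ≤ W 1 ω - W 0 ω) ↔ (u' ≤ W 1 ω - lam) := by
            rw [h0]
            constructor <;> intro <;> linarith
          exact eq_iff_iff.mpr hiff
  -- limit in j
  set Sj : ℕ → Set Ω := fun j => {ω | u - 1/((j:ℝ)+1) ≤ W 1 ω - lam} with hSj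
  have hSm : ∀ j, MeasurableSet (Sj j) :=
    fun j => measurableSet_le measurable_const ((hWm 1).sub measurable_const)
  have hanti : Antitone Sj := by
    intro a b hab ω hω
    simp only [hSj, Set.mem_setOf_eq] at *
    have h1 : 1/((b:ℝ)+1) ≤ 1/((a:ℝ)+1) := by
      apply one_div_le_one_div_of_le (by positivity)
      have : (a:ℝ) ≤ (b:ℝ) := Nat.cast_le.mpr hab
      linarith
    linarith
  have hiInter : ⋂ j, Sj j = {ω | u ≤ W 1 ω - lam} := by
    ext ω
    simp only [Set.mem_iInter, hSj, Set.mem_setOf_eq]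
    constructor
    · intro h
      by_contra hlt
      push_neg at hlt
      obtain ⟨j, hj⟩ := exists_nat_gt (1/(u - (W 1 ω - lam)))
      have hpos : 0 < u - (W 1 ω - lam) := by linarith
      have hj' := h j
      have h2 : 1/((j:ℝ)+1) < u - (W 1 ω - lam) := by
        rw [div_lt_iff₀ (by positivity)]
        have h3 := (div_lt_iff₀ hpos).mp hj
        nlinarith
      linarith
    · intro h j
      have : (0:ℝ) < 1/((j:ℝ)+1) := by positivity
      linarith
  have htend : Filter.Tendsto (fun j => ℙ (Sj j)) Filter.atTop
      (nhds (ℙ {ω | u ≤ W 1 ω - lam})) := by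
    rw [← hiInter]
    exact tendsto_measure_iInter_atTop (fun j => (hSm j).nullMeasurableSet) hanti
      ⟨0, measure_ne_top _ _⟩
  have htend2 : Filter.Tendsto (fun j => ε₀⁻¹ * ℙ (Sj j)) Filter.atTop
      (nhds (ε₀⁻¹ * ℙ {ω | u ≤ W 1 ω - lam})) :=
    ENNReal.Tendsto.const_mul htend (Or.inr (ENNReal.inv_ne_top.mpr hε₀pos.ne'))
  exact ge_of_tendsto htend2 (Filter.Eventually.of_forall main)
end
end

section
/- Let W_1, …, W_d be independent standard one-dimensional Brownian motions, let H_1, …, H_d ∈ (1/2, 1], let c_1, …, c_d ∈ ℝ and T > 0. Then there exists a constant C > 0, not depending on u, such that for every u > 1, P(∃ t ∈ [0,T] : W_i(t^{2H_i}) − c_i t > u for all i ∈ {1,…,d}) ≤ C · P(W_i(T^{2H_i}) − c_i T > u for all i ∈ {1,…,d}). -/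
open MeasureTheory ProbabilityTheory Set
open scoped ENNReal NNReal Pointwise ProbabilityTheory

noncomputable section

lemma aux_gauss_pos (K : ℝ) : 0 < gaussianReal 0 1 (Set.Ici K) := by
  rcases eq_or_ne (gaussianReal 0 1 (Set.Ici K)) 0 with h | h
  · exfalso
    have habs := gaussianReal_absolutelyContinuous' (0:ℝ) (v := 1) one_ne_zero
    have hv : (volume : Measure ℝ) (Set.Ici K) = 0 := habs h
    simp [Real.volume_Ici] at hv
  · exact pos_iff_ne_zero.mpr h

lemma aux_gauss_lb (v : ℝ≥0) (hv : v ≠ 0) (a K : ℝ) (h : a ≤ K * Real.sqrt v) :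
    gaussianReal 0 1 (Set.Ici K) ≤ gaussianReal 0 v (Set.Ici a) := by
  have hsv : (0:ℝ) < Real.sqrt v := Real.sqrt_pos.2 (by exact_mod_cast hv.bot_lt)
  have hvv : (⟨(Real.sqrt v)^2, sq_nonneg _⟩ : ℝ≥0) * 1 = v := by
    ext
    simp [Real.sq_sqrt v.2]
  have hmap := gaussianReal_map_const_mul (μ := 0) (v := 1) (Real.sqrt v)
  replace hmap : Measure.map (fun x => Real.sqrt v * x) (gaussianReal 0 1) = gaussianReal 0 v := by
    rw [hmap, mul_zero]; congr 1
  rw [← hmap, Measure.map_apply (measurable_const_mul _) measurableSet_Ici]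
  refine measure_mono ?_
  intro x hx
  simp only [Set.mem_Ici, Set.mem_preimage] at *
  calc a ≤ K * Real.sqrt v := h
  _ ≤ Real.sqrt v * x := by rw [mul_comm]; exact mul_le_mul_of_nonneg_left hx hsv.le

def auxK (ci T Hi : ℝ) : ℝ := |ci| * Real.sqrt T / Real.sqrt (T ^ (2 * Hi - 1))

lemma aux_tail (ci T Hi : ℝ) (hT : 0 < T) (hHi : 1 ≤ 2 * Hi) (t : ℝ)
    (ht : t ∈ Set.Icc 0 T) :
    gaussianReal 0 1 (Set.Ici (auxK ci T Hi)) ≤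
      gaussianReal 0 ((T ^ (2 * Hi) - t ^ (2 * Hi)).toNNReal)
        (Set.Ici (ci * (T - t))) := by
  obtain ⟨ht0, htT⟩ := ht
  have h2H : (0:ℝ) < 2 * Hi := lt_of_lt_of_le one_pos hHi
  rcases eq_or_lt_of_le htT with rfl | htlt
  · -- t = T : variance zero, dirac
    simp only [sub_self, mul_zero, Real.toNNReal_zero, gaussianReal_zero_var]
    rw [Measure.dirac_apply' _ measurableSet_Ici]
    have h1 : (1:ℝ≥0∞) ≤ Set.indicator (Set.Ici (0:ℝ)) 1 0 := by
      simp [Set.indicator_of_mem, Set.self_mem_Ici]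
    exact le_trans prob_le_one h1
  · -- t < T
    have hΔpos : 0 < T ^ (2 * Hi) - t ^ (2 * Hi) := by
      have := Real.rpow_lt_rpow ht0 htlt h2H
      linarith
    have hvne : (T ^ (2 * Hi) - t ^ (2 * Hi)).toNNReal ≠ 0 := by
      simp only [ne_eq, Real.toNNReal_eq_zero, not_le]
      linarith
    refine aux_gauss_lb _ hvne _ _ ?_
    have hcoe : ((T ^ (2 * Hi) - t ^ (2 * Hi)).toNNReal : ℝ)
        = T ^ (2 * Hi) - t ^ (2 * Hi) := Real.coe_toNNReal _ hΔpos.le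
    rw [hcoe]
    -- key concavity: T^{2H-1} * (T - t) ≤ T^{2H} - t^{2H}
    have hconc : T ^ (2 * Hi - 1) * (T - t) ≤ T ^ (2 * Hi) - t ^ (2 * Hi) := by
      have hTsplit : T ^ (2 * Hi - 1) * T = T ^ (2 * Hi) := by
        nth_rewrite 2 [show (2 * Hi) = (2 * Hi - 1) + 1 by ring]
        rw [Real.rpow_add hT, Real.rpow_one]
      have hts : t ^ (2 * Hi) ≤ T ^ (2 * Hi - 1) * t := by
        rcases eq_or_lt_of_le ht0 with rfl | ht0'
        · rw [Real.zero_rpow (ne_of_gt h2H), mul_zero]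
        · have htsplit : t ^ (2 * Hi - 1) * t = t ^ (2 * Hi) := by
            nth_rewrite 2 [show (2 * Hi) = (2 * Hi - 1) + 1 by ring]
            rw [Real.rpow_add ht0', Real.rpow_one]
          rw [← htsplit]
          exact mul_le_mul_of_nonneg_right
            (Real.rpow_le_rpow ht0 htT (by linarith)) ht0
      nlinarith
    -- now  ci * (T - t) ≤ auxK * sqrt (T^{2H} - t^{2H})
    have hTr : (0:ℝ) < T ^ (2 * Hi - 1) := Real.rpow_pos_of_pos hT _
    have hsr : (0:ℝ) < Real.sqrt (T ^ (2 * Hi - 1)) := Real.sqrt_pos.2 hTr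
    have hstep : (T - t) * Real.sqrt (T ^ (2 * Hi - 1)) ≤
        Real.sqrt T * Real.sqrt (T ^ (2 * Hi) - t ^ (2 * Hi)) := by
      rw [← Real.sqrt_sq (by linarith : (0:ℝ) ≤ T - t), ← Real.sqrt_mul (sq_nonneg _),
        ← Real.sqrt_mul hT.le]
      refine Real.sqrt_le_sqrt ?_
      nlinarith
    have habs : ci * (T - t) ≤ |ci| * (T - t) := by
      have : ci ≤ |ci| := le_abs_self ci
      nlinarith
    refine le_trans habs ?_
    rw [auxK, div_mul_eq_mul_div, le_div_iff₀ hsr]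
    calc |ci| * (T - t) * Real.sqrt (T ^ (2 * Hi - 1))
        = |ci| * ((T - t) * Real.sqrt (T ^ (2 * Hi - 1))) := by ring
      _ ≤ |ci| * (Real.sqrt T * Real.sqrt (T ^ (2 * Hi) - t ^ (2 * Hi))) := by
          exact mul_le_mul_of_nonneg_left hstep (abs_nonneg ci)
      _ = |ci| * Real.sqrt T * Real.sqrt (T ^ (2 * Hi) - t ^ (2 * Hi)) := by ring

lemma aux_pair_indep {Ω : Type*} [MeasureSpace Ω] [IsProbabilityMeasure (ℙ : Measure Ω)]
    {d n : ℕ} (X : Fin d → Fin n → Ω → ℝ)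
    (hrows : iIndepFun (fun i ω => fun m => X i m ω) ℙ)
    (hwithin : ∀ i, iIndepFun (X i) ℙ) :
    iIndepFun (fun p : Fin d × Fin n => X p.1 p.2) ℙ := by
  classical
  rw [iIndepFun_iff_measure_inter_preimage_eq_mul]
  intro S sets hsets
  set B : Fin d → Set (Fin n → ℝ) :=
    fun i => ⋂ m ∈ Finset.univ.filter (fun m : Fin n => (i, m) ∈ S),
      (fun v : Fin n → ℝ => v m) ⁻¹' sets (i, m) with hB
  have hBmeas : ∀ i, MeasurableSet (B i) := by
    intro i
    refine MeasurableSet.biInter (Finset.countable_toSet _) (fun m hm => ?_)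
    exact (measurable_pi_apply m) (hsets _ (Finset.mem_filter.mp hm).2)
  have hset1 : (⋂ p ∈ S, (fun ω => X p.1 p.2 ω) ⁻¹' sets p)
      = ⋂ i ∈ (Finset.univ : Finset (Fin d)), (fun ω => fun m => X i m ω) ⁻¹' B i := by
    ext ω
    simp only [Set.mem_iInter, Set.mem_preimage, hB, Finset.mem_filter, Finset.mem_univ,
      true_and]
    tauto
  have hset2 : ∀ i, ((fun ω => fun m => X i m ω) ⁻¹' B i)
      = ⋂ m ∈ Finset.univ.filter (fun m : Fin n => (i, m) ∈ S), (X i m) ⁻¹' sets (i, m) := by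
    intro i
    ext ω
    simp only [Set.mem_preimage, hB, Set.mem_iInter]

  rw [hset1, hrows.measure_inter_preimage_eq_mul Finset.univ (fun i _ => hBmeas i)]
  have hinner : ∀ i, ℙ ((fun ω => fun m => X i m ω) ⁻¹' B i)
      = ∏ m ∈ Finset.univ.filter (fun m : Fin n => (i, m) ∈ S), ℙ ((X i m) ⁻¹' sets (i, m)) := by
    intro i
    rw [hset2 i]
    exact (hwithin i).measure_inter_preimage_eq_mul
      (Finset.univ.filter (fun m : Fin n => (i, m) ∈ S))
      (fun m hm => hsets _ (Finset.mem_filter.mp hm).2)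
  calc ∏ i, ℙ ((fun ω => fun m => X i m ω) ⁻¹' B i)
      = ∏ i, ∏ m ∈ Finset.univ.filter (fun m : Fin n => (i, m) ∈ S),
          ℙ ((X i m) ⁻¹' sets (i, m)) := Finset.prod_congr rfl (fun i _ => hinner i)
    _ = ∏ i, ∏ p ∈ S.filter (fun p : Fin d × Fin n => p.1 = i),
          ℙ ((fun ω => X p.1 p.2 ω) ⁻¹' sets p) := by
        refine Finset.prod_congr rfl (fun i _ => ?_)
        refine Finset.prod_nbij' (fun m => (i, m)) (fun p => p.2) ?_ ?_ ?_ ?_ ?_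
        · intro m hm
          simp only [Finset.mem_filter, Finset.mem_univ, true_and] at hm ⊢
          aesop

        · intro p hp
          simp only [Finset.mem_filter, Finset.mem_univ, true_and] at hp ⊢
          rcases hp with ⟨hpS, hpi⟩
          rw [show ((i, p.2) : Fin d × Fin n) = p by rw [← hpi]]
          exact hpS
        · intro m _; rfl
        · intro p hp
          simp only [Finset.mem_filter] at hp
          rw [← hp.2]
        · intro m _; rfl
    _ = ∏ p ∈ S, ℙ ((fun ω => X p.1 p.2 ω) ⁻¹' sets p) := by
        exact Finset.prod_fiberwise_of_maps_to (fun p _ => Finset.mem_univ p.1) _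

lemma aux_grid {Ω : Type*} [MeasureSpace Ω] [IsProbabilityMeasure (ℙ : Measure Ω)]
    {d : ℕ} (W : Fin d → ℝ → Ω → ℝ) (hW : ∀ i, IsStandardBM (W i))
    (hWindep : iIndepFun
      (fun (i : Fin d) (ω : Ω) => fun t : ℝ => W i t ω) ℙ)
    (H : Fin d → ℝ) (hH : ∀ i, 1 ≤ 2 * H i)
    (c : Fin d → ℝ) (T : ℝ) (hT : 0 < T) (u : ℝ)
    (n : ℕ) (τ : Fin n → ℝ) (hτmono : Monotone τ) (hτmem : ∀ j, τ j ∈ Set.Icc 0 T) :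
    (∏ i, gaussianReal 0 1 (Set.Ici (auxK (c i) T (H i)))) *
      ℙ (⋃ j, {ω | ∀ i, u < W i (τ j ^ (2 * H i)) ω - c i * τ j}) ≤
      ℙ {ω | ∀ i, u < W i (T ^ (2 * H i)) ω - c i * T} := by
  classical
  have h2Hpos : ∀ i, (0:ℝ) < 2 * H i := fun i => lt_of_lt_of_le one_pos (hH i)
  set ρ : Fin d → ℝ → ℝ := fun i t => t ^ (2 * H i) with hρ
  have hρ0 : ∀ i, ρ i 0 = 0 := fun i => Real.zero_rpow (ne_of_gt (h2Hpos i))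
  have hρmono : ∀ i, ∀ a b : ℝ, 0 ≤ a → a ≤ b → ρ i a ≤ ρ i b :=
    fun i a b ha hab => Real.rpow_le_rpow ha hab (h2Hpos i).le
  have hρnn : ∀ i t, 0 ≤ t → 0 ≤ ρ i t := fun i t ht => Real.rpow_nonneg ht _
  have hWmeas : ∀ i t, Measurable (W i t) := fun i => (hW i).1
  set Etil : Fin n → Set Ω := fun j => {ω | ∀ i, u < W i (ρ i (τ j)) ω - c i * τ j} with hEtil
  have hEtilmeas : ∀ j, MeasurableSet (Etil j) := by
    intro j
    rw [hEtil]
    simp only [Set.setOf_forall]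
    exact MeasurableSet.iInter (fun i =>
      measurableSet_lt measurable_const ((hWmeas i _).sub measurable_const))
  set Cs : Fin n → Set Ω := fun j => Etil j \ ⋃ (j' : Fin n) (_ : j' < j), Etil j' with hCs
  have hCsmeas : ∀ j, MeasurableSet (Cs j) := by
    intro j
    exact (hEtilmeas j).diff (MeasurableSet.iUnion (fun j' =>
      MeasurableSet.iUnion (fun _ => hEtilmeas j')))
  set Hs : Fin n → Set Ω := fun j =>
    {ω | ∀ i, c i * (T - τ j) ≤ W i (ρ i T) ω - W i (ρ i (τ j)) ω} with hHs
  have hHsmeas : ∀ j, MeasurableSet (Hs j) := by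
    intro j
    rw [hHs]
    simp only [Set.setOf_forall]
    exact MeasurableSet.iInter (fun i =>
      measurableSet_le measurable_const ((hWmeas i _).sub (hWmeas i _)))
  -- claim 1
  have hclaim1 : ∀ j, Cs j ∩ Hs j ⊆ {ω | ∀ i, u < W i (ρ i T) ω - c i * T} := by
    intro j ω hω i
    have h1 : u < W i (ρ i (τ j)) ω - c i * τ j := hω.1.1 i
    have h2 : c i * (T - τ j) ≤ W i (ρ i T) ω - W i (ρ i (τ j)) ω := hω.2 i
    show u < W i (ρ i T) ω - c i * T
    nlinarith [h1, h2]
  -- claim 2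
  have hHval : ∀ j, (∏ i, gaussianReal 0 1 (Set.Ici (auxK (c i) T (H i)))) ≤ ℙ (Hs j) := by
    intro j
    have hFind : iIndepFun
        (fun i (ω : Ω) => W i (ρ i T) ω - W i (ρ i (τ j)) ω) ℙ := by
      have h := hWindep.comp (g := fun i (f : ℝ → ℝ) => f (ρ i T) - f (ρ i (τ j)))
        (fun i => (measurable_pi_apply _).sub (measurable_pi_apply _))
      exact h
    have hset : Hs j = ⋂ i ∈ (Finset.univ : Finset (Fin d)),
        (fun ω => W i (ρ i T) ω - W i (ρ i (τ j)) ω) ⁻¹' Set.Ici (c i * (T - τ j)) := by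
      ext ω
      simp [hHs]
    rw [hset, hFind.measure_inter_preimage_eq_mul Finset.univ (fun i _ => measurableSet_Ici)]
    refine Finset.prod_le_prod' (fun i _ => ?_)
    have hlaw := (hW i).2.2.2.1 (ρ i (τ j)) (ρ i T) (hρnn i _ (hτmem j).1)
      (hρmono i _ _ (hτmem j).1 (hτmem j).2)
    rw [← Measure.map_apply (f := fun ω => W i (ρ i T) ω - W i (ρ i (τ j)) ω) ((hWmeas i _).sub (hWmeas i _)) measurableSet_Ici, hlaw]
    exact aux_tail (c i) T (H i) hT (hH i) (τ j) (hτmem j)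
  -- claim 3: independence
  have hclaim3 : ∀ j, ℙ (Cs j ∩ Hs j) = ℙ (Cs j) * ℙ (Hs j) := by
    intro j
    have hjn : (j : ℕ) < n := j.isLt
    -- nonneg time grid 0, τ 0, ..., τ j, T
    set g : ℕ → ℝ := fun m =>
      if m = 0 then 0 else if h2 : (j : ℕ) + 2 ≤ m then T
        else τ ⟨m - 1, by omega⟩ with hg
    have hg0 : g 0 = 0 := by simp [hg]
    have hgsucc : ∀ (m : ℕ) (hm : m ≤ (j:ℕ)), g (m+1) = τ ⟨m, by omega⟩ := by
      intro m hm
      simp only [hg]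
      rw [if_neg (Nat.succ_ne_zero m), dif_neg (by omega)]
      rfl
    have hgT : ∀ m : ℕ, (j:ℕ) + 2 ≤ m → g m = T := by
      intro m hm
      simp only [hg]
      rw [if_neg (by omega), dif_pos hm]
    have hgmid : ∀ (m : ℕ) (h0 : m ≠ 0) (h2 : ¬ ((j:ℕ)+2 ≤ m)),
        g m = τ ⟨m - 1, by omega⟩ := by
      intro m h0 h2
      simp only [hg]
      rw [if_neg h0, dif_neg h2]
    have hgmem : ∀ m, g m ∈ Set.Icc (0:ℝ) T := by
      intro m
      by_cases h0 : m = 0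
      · rw [h0, hg0]; exact ⟨le_refl 0, hT.le⟩
      by_cases h2 : (j:ℕ)+2 ≤ m
      · rw [hgT m h2]; exact ⟨hT.le, le_refl T⟩
      · rw [hgmid m h0 h2]; exact hτmem _
    have hgmono : Monotone g := by
      apply monotone_nat_of_le_succ
      intro m
      by_cases h0 : m = 0
      · rw [h0, hg0]; exact (hgmem 1).1
      by_cases h2 : (j:ℕ)+2 ≤ m
      · rw [hgT m h2, hgT (m+1) (by omega)]
      by_cases h3 : (j:ℕ)+2 ≤ m+1
      · rw [hgT (m+1) h3, hgmid m h0 h2]; exact (hτmem _).2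
      · have hm2 : g (m+1) = τ ⟨m, by omega⟩ := hgsucc m (by omega)
        rw [hgmid m h0 h2, hm2]
        exact hτmono (Fin.mk_le_mk.mpr (by omega))
    set ts : Fin d → ℕ → ℝ := fun i m => ρ i (g m) with hts
    have htsmono : ∀ i, Monotone (ts i) := fun i a b hab =>
      hρmono i _ _ (hgmem a).1 (hgmono hab)
    have hts0 : ∀ i, ts i 0 = 0 := by
      intro i
      simp only [hts, hg0]
      exact hρ0 i
    set Δ : Fin d × Fin ((j:ℕ)+2) → Ω → ℝ :=
      fun p ω => W p.1 (ts p.1 ((p.2 : ℕ)+1)) ω - W p.1 (ts p.1 (p.2 : ℕ)) ω with hΔ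
    have hΔmeas : ∀ p, Measurable (Δ p) := fun p => ((hWmeas _ _).sub (hWmeas _ _))
    have hwithin : ∀ i, iIndepFun
        (fun m : Fin ((j:ℕ)+2) => Δ (i, m)) ℙ := by
      intro i
      have h5 := (hW i).2.2.2.2 ((j:ℕ)+2) (fun k : Fin ((j:ℕ)+2+1) => ts i (k : ℕ))
        (fun a b hab => htsmono i hab) (le_of_eq (hts0 i).symm)
      exact h5
    have hrows : iIndepFun
        (fun i (ω : Ω) => fun m : Fin ((j:ℕ)+2) => Δ (i, m) ω) ℙ := by
      have h := hWindep.comp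
        (g := fun i (f : ℝ → ℝ) => fun m : Fin ((j:ℕ)+2) => f (ts i ((m:ℕ)+1)) - f (ts i (m:ℕ)))
        (fun i => measurable_pi_lambda _
          (fun m => (measurable_pi_apply _).sub (measurable_pi_apply _)))
      exact h
    have hpairs : iIndepFun
        (fun p : Fin d × Fin ((j:ℕ)+2) => Δ (p.1, p.2)) ℙ :=
      aux_pair_indep (fun i m => Δ (i, m)) hrows hwithin
    set Spast : Finset (Fin d × Fin ((j:ℕ)+2)) :=
      Finset.univ ×ˢ Finset.univ.filter (fun m : Fin ((j:ℕ)+2) => (m:ℕ) < (j:ℕ)+1) with hSpast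
    set Sfut : Finset (Fin d × Fin ((j:ℕ)+2)) :=
      Finset.univ ×ˢ Finset.univ.filter (fun m : Fin ((j:ℕ)+2) => (m:ℕ) = (j:ℕ)+1) with hSfut
    have hmemSpast : ∀ (i : Fin d) (m : Fin ((j:ℕ)+2)), (m:ℕ) < (j:ℕ)+1 → (i, m) ∈ Spast := by
      intro i m hm
      simp [hSpast, Finset.mem_product, hm]
      omega
    have hmemSfut : ∀ i : Fin d, (i, (⟨(j:ℕ)+1, by omega⟩ : Fin ((j:ℕ)+2))) ∈ Sfut := by
      intro i
      simp [hSfut, Finset.mem_product]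
    have hdisjST : Disjoint Spast Sfut := by
      rw [Finset.disjoint_left]
      intro p hp hp'
      simp only [hSpast, hSfut, Finset.mem_product, Finset.mem_filter, Finset.mem_univ,
        true_and] at hp hp'
      omega
    have hPF0 := hpairs.indepFun_finset Spast Sfut hdisjST (fun p => hΔmeas _)
    set emb : Fin ((j:ℕ)+1) → Fin n :=
      fun m => ⟨(m:ℕ), lt_of_lt_of_le m.isLt (Nat.succ_le_of_lt hjn)⟩ with hemb
    have hidxP : ∀ (q : Fin d × Fin ((j:ℕ)+1)) (m : ℕ) (hm : m < (q.2:ℕ)+1),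
        (q.1, (⟨m, by have h2 := q.2.isLt; omega⟩ : Fin ((j:ℕ)+2))) ∈ Spast := by
      intro q m hm
      refine hmemSpast q.1 _ ?_
      show m < (j:ℕ)+1
      have h2 := q.2.isLt
      omega
    set φ : ({x // x ∈ Spast} → ℝ) → (Fin d × Fin ((j:ℕ)+1) → ℝ) :=
      fun v q => ∑ m ∈ (Finset.range ((q.2:ℕ)+1)).attach,
        v ⟨_, hidxP q (m:ℕ) (Finset.mem_range.mp m.2)⟩ with hφ
    have hφmeas : Measurable φ := measurable_pi_lambda _ (fun q =>
      Finset.measurable_sum _ (fun m _ => measurable_pi_apply _))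
    set ψ : ({x // x ∈ Sfut} → ℝ) → (Fin d → ℝ) :=
      fun v i => v ⟨(i, ⟨(j:ℕ)+1, by omega⟩), hmemSfut i⟩ with hψ
    have hψmeas : Measurable ψ := measurable_pi_lambda _ (fun i => measurable_pi_apply _)
    have hPF1 := hPF0.comp hφmeas hψmeas
    set PastVec : Ω → (Fin d × Fin ((j:ℕ)+1) → ℝ) := fun ω q =>
      W q.1 (ρ q.1 (τ (emb q.2))) ω - W q.1 0 ω with hPastVec
    set FutVec : Ω → (Fin d → ℝ) := fun ω i => W i (ρ i T) ω - W i (ρ i (τ j)) ω with hFutVec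
    have hPF : IndepFun PastVec FutVec ℙ := by
      have e1 : (φ ∘ fun a (p : {x // x ∈ Spast}) =>
          (fun p : Fin d × Fin ((j:ℕ)+2) => Δ (p.1, p.2)) (↑p) a) = PastVec := by
        funext ω q
        have step1 : (φ ∘ fun a (p : {x // x ∈ Spast}) =>
            (fun p : Fin d × Fin ((j:ℕ)+2) => Δ (p.1, p.2)) (↑p) a) ω q
            = ∑ m ∈ (Finset.range ((q.2:ℕ)+1)).attach,
              (fun k : ℕ => W q.1 (ts q.1 (k+1)) ω - W q.1 (ts q.1 k) ω) ((m:ℕ)) := rfl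
        rw [step1, Finset.sum_attach (Finset.range ((q.2:ℕ)+1))
            (fun k : ℕ => W q.1 (ts q.1 (k+1)) ω - W q.1 (ts q.1 k) ω),
          Finset.sum_range_sub (fun k : ℕ => W q.1 (ts q.1 k) ω)]
        show W q.1 (ts q.1 ((q.2:ℕ)+1)) ω - W q.1 (ts q.1 0) ω = PastVec ω q
        have h1 : ts q.1 ((q.2:ℕ)+1) = ρ q.1 (τ (emb q.2)) :=
          congrArg (ρ q.1) (hgsucc (q.2:ℕ) (by have := q.2.isLt; omega))
        rw [h1, hts0 q.1]
      have e2 : (ψ ∘ fun a (p : {x // x ∈ Sfut}) =>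
          (fun p : Fin d × Fin ((j:ℕ)+2) => Δ (p.1, p.2)) (↑p) a) = FutVec := by
        funext ω i
        have h1 : ts i ((j:ℕ)+1+1) = ρ i T := congrArg (ρ i) (hgT ((j:ℕ)+2) (le_refl _))
        have h2 : ts i ((j:ℕ)+1) = ρ i (τ j) :=
          congrArg (ρ i) (hgsucc (j:ℕ) (le_refl _))
        show W i (ts i ((j:ℕ)+1+1)) ω - W i (ts i ((j:ℕ)+1)) ω = FutVec ω i
        rw [h1, h2]
      rw [← e1, ← e2]
      exact hPF1
    -- Borel sets
    set Bp : Set (Fin d × Fin ((j:ℕ)+1) → ℝ) :=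
      {v | (∀ i, u < v (i, Fin.last (j:ℕ)) - c i * τ j) ∧
        ∀ m : Fin ((j:ℕ)+1), (m:ℕ) < (j:ℕ) → ¬ (∀ i, u < v (i, m) - c i * τ (emb m))} with hBp
    have hBpmeas : MeasurableSet Bp := by
      rw [hBp, Set.setOf_and]
      refine MeasurableSet.inter ?_ ?_
      · rw [Set.setOf_forall]
        exact MeasurableSet.iInter (fun i => measurableSet_lt measurable_const
          ((measurable_pi_apply _).sub measurable_const))
      · rw [Set.setOf_forall]
        refine MeasurableSet.iInter (fun m => ?_)
        by_cases hm : (m:ℕ) < (j:ℕ)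
        · simp only [hm, forall_true_left]
          have heq : {v : Fin d × Fin ((j:ℕ)+1) → ℝ | ¬ (∀ i, u < v (i, m) - c i * τ (emb m))}
              = ({v | ∀ i, u < v (i, m) - c i * τ (emb m)})ᶜ := rfl
          rw [heq]
          refine MeasurableSet.compl ?_
          rw [Set.setOf_forall]
          exact MeasurableSet.iInter (fun i => measurableSet_lt measurable_const
            ((measurable_pi_apply _).sub measurable_const))
        · simp only [hm, false_implies]
          exact MeasurableSet.univ
    set Bf : Set (Fin d → ℝ) := {v | ∀ i, c i * (T - τ j) ≤ v i} with hBf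
    have hBfmeas : MeasurableSet Bf := by
      rw [hBf, Set.setOf_forall]
      exact MeasurableSet.iInter (fun i =>
        measurableSet_le measurable_const (measurable_pi_apply _))
    have hHsver : Hs j = FutVec ⁻¹' Bf := rfl
    have hzero : ∀ᵐ ω ∂(ℙ : Measure Ω), ∀ i, W i 0 ω = 0 :=
      (ae_all_iff).mpr (fun i => (hW i).2.1)
    have hCs_ae : Cs j =ᵐ[ℙ] PastVec ⁻¹' Bp := by
      rw [Filter.eventuallyEq_set]
      filter_upwards [hzero] with ω hω
      have hPV : ∀ (i : Fin d) (m : Fin ((j:ℕ)+1)),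
          PastVec ω (i, m) = W i (ρ i (τ (emb m))) ω := by
        intro i m
        show W i (ρ i (τ (emb m))) ω - W i 0 ω = W i (ρ i (τ (emb m))) ω
        rw [hω i, sub_zero]
      have hembl : emb (Fin.last (j:ℕ)) = j := Fin.ext rfl
      constructor
      · rintro ⟨h1, h2⟩
        refine ⟨fun i => ?_, fun m hm hall => ?_⟩
        · rw [hPV i (Fin.last (j:ℕ)), hembl]
          exact h1 i
        · refine h2 (Set.mem_iUnion.mpr ⟨emb m, Set.mem_iUnion.mpr ⟨?_, fun i => ?_⟩⟩)
          · exact Fin.lt_def.mpr hm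
          · have := hall i
            rw [hPV i m] at this
            exact this
      · rintro ⟨h1, h2⟩
        constructor
        · intro i
          have := h1 i
          rw [hPV i (Fin.last (j:ℕ)), hembl] at this
          exact this
        · intro hcon
          rw [Set.mem_iUnion] at hcon
          obtain ⟨j', hj'⟩ := hcon
          rw [Set.mem_iUnion] at hj'
          obtain ⟨hlt, hmem⟩ := hj'
          have hltv : (j':ℕ) < (j:ℕ) := Fin.lt_def.mp hlt
          refine h2 ⟨(j':ℕ), by omega⟩ hltv (fun i => ?_)
          rw [hPV i _]
          have heq : emb ⟨(j':ℕ), by omega⟩ = j' := Fin.ext rfl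
          rw [heq]
          exact hmem i
    calc ℙ (Cs j ∩ Hs j) = ℙ ((PastVec ⁻¹' Bp) ∩ (FutVec ⁻¹' Bf)) := by
          rw [hHsver]
          exact measure_congr (MeasureTheory.ae_eq_set_inter hCs_ae
            (Filter.EventuallyEq.refl _ _))
      _ = ℙ (PastVec ⁻¹' Bp) * ℙ (FutVec ⁻¹' Bf) :=
          hPF.measure_inter_preimage_eq_mul Bp Bf hBpmeas hBfmeas
      _ = ℙ (Cs j) * ℙ (Hs j) := by
          rw [← measure_congr hCs_ae, hHsver]
  -- disjointness
  have hCsdisj : Pairwise (Function.onFun Disjoint Cs) := by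
    have haux : ∀ a b : Fin n, a < b → Disjoint (Cs a) (Cs b) := by
      intro a b hab
      rw [Set.disjoint_left]
      intro ω hωa hωb
      exact (Set.notMem_of_mem_diff hωb)
        (Set.mem_iUnion.mpr ⟨a, Set.mem_iUnion.mpr ⟨hab, hωa.1⟩⟩)
    intro a b hab
    rcases lt_or_gt_of_ne hab with h | h
    · exact haux a b h
    · exact (haux b a h).symm
  have hCsunion : (⋃ j, Cs j) = ⋃ j, Etil j := by
    apply Set.Subset.antisymm
    · exact Set.iUnion_mono (fun j => Set.diff_subset)
    · intro ω hω
      rw [Set.mem_iUnion] at hω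
      set Sw : Finset (Fin n) := Finset.univ.filter (fun j => ω ∈ Etil j) with hSw
      have hSwne : Sw.Nonempty := by
        obtain ⟨j, hj⟩ := hω
        exact ⟨j, by simp [hSw, hj]⟩
      set j0 := Sw.min' hSwne with hj0
      have hj0mem : ω ∈ Etil j0 := by
        have := Sw.min'_mem hSwne
        simp only [hSw, Finset.mem_filter] at this
        exact this.2
      refine Set.mem_iUnion.mpr ⟨j0, hj0mem, ?_⟩
      intro hcon
      rw [Set.mem_iUnion] at hcon
      obtain ⟨j', hj'⟩ := hcon
      rw [Set.mem_iUnion] at hj'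
      obtain ⟨hlt, hmem⟩ := hj'
      have : j0 ≤ j' := Finset.min'_le _ _ (by simp [hSw, hmem])
      exact absurd hlt (not_lt.mpr this)
  -- assemble
  have hCHdisj : Pairwise (Function.onFun Disjoint (fun j => Cs j ∩ Hs j)) := by
    intro a b hab
    exact ((hCsdisj hab).mono Set.inter_subset_left Set.inter_subset_left)
  calc (∏ i, gaussianReal 0 1 (Set.Ici (auxK (c i) T (H i)))) * ℙ (⋃ j, Etil j)
      = ∑' j, (∏ i, gaussianReal 0 1 (Set.Ici (auxK (c i) T (H i)))) * ℙ (Cs j) := by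
        rw [← hCsunion, measure_iUnion hCsdisj hCsmeas, ENNReal.tsum_mul_left]
    _ ≤ ∑' j, ℙ (Cs j ∩ Hs j) := by
        refine ENNReal.tsum_le_tsum (fun j => ?_)
        rw [hclaim3 j, mul_comm]
        exact mul_le_mul_right (hHval j) _
    _ = ℙ (⋃ j, Cs j ∩ Hs j) :=
        (measure_iUnion hCHdisj (fun j => (hCsmeas j).inter (hHsmeas j))).symm
    _ ≤ ℙ {ω | ∀ i, u < W i (ρ i T) ω - c i * T} :=
        measure_mono (Set.iUnion_subset hclaim1)


/-- **Section 3 (illustration).** For independent standard Brownian motions `W_1, …, W_d`,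
Hurst indices `H_i ∈ (1/2, 1]`, drifts `c_i ∈ ℝ` and `T > 0`, there is a constant `C > 0` not
depending on `u` such that for all `u > 1`,
`P(∃ t ∈ [0,T] : ∀ i, W_i(t^{2H_i}) - c_i t > u) ≤ C P(∀ i, W_i(T^{2H_i}) - c_i T > u)`. -/
theorem stmt_14 {Ω : Type*} [MeasureSpace Ω] [IsProbabilityMeasure (ℙ : Measure Ω)]
    {d : ℕ} (W : Fin d → ℝ → Ω → ℝ) (hW : ∀ i, IsStandardBM (W i))
    (hWindep : iIndepFun
      (fun (i : Fin d) (ω : Ω) => fun t : ℝ => W i t ω) ℙ)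
    (H : Fin d → ℝ) (hH : ∀ i, H i ∈ Set.Ioc (1 / 2 : ℝ) 1)
    (c : Fin d → ℝ) (T : ℝ) (hT : 0 < T) :
    ∃ C : ℝ, 0 < C ∧ ∀ u : ℝ, 1 < u →
      ℙ {ω | ∃ t ∈ Set.Icc (0 : ℝ) T, ∀ i, u < W i (t ^ (2 * H i)) ω - c i * t} ≤
        ENNReal.ofReal C * ℙ {ω | ∀ i, u < W i (T ^ (2 * H i)) ω - c i * T} := by
  classical
  have h2H : ∀ i, 1 ≤ 2 * H i := fun i => by have := (hH i).1; linarith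
  set pstar : ℝ≥0∞ := ∏ i, gaussianReal 0 1 (Set.Ici (auxK (c i) T (H i))) with hpstar
  have hp0 : pstar ≠ 0 := by
    rw [hpstar, Finset.prod_ne_zero_iff]
    exact fun i _ => (aux_gauss_pos _).ne'
  have hp1 : pstar ≤ 1 := by
    rw [hpstar]
    calc ∏ i, gaussianReal 0 1 (Set.Ici (auxK (c i) T (H i))) ≤ ∏ _i : Fin d, 1 :=
        Finset.prod_le_prod' (fun i _ => prob_le_one)
      _ = 1 := Finset.prod_const_one
  have hptop : pstar ≠ ⊤ := ne_top_of_le_ne_top ENNReal.one_ne_top hp1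
  refine ⟨(pstar⁻¹).toReal, ENNReal.toReal_pos (ENNReal.inv_ne_zero.mpr hptop)
    (ENNReal.inv_ne_top.mpr hp0), ?_⟩
  intro u _hu
  have hofreal : ENNReal.ofReal (pstar⁻¹).toReal = pstar⁻¹ :=
    ENNReal.ofReal_toReal (ENNReal.inv_ne_top.mpr hp0)
  rw [hofreal]
  -- countable dense set
  set D : Set ℝ := insert T (Set.range ((↑) : ℚ → ℝ) ∩ Set.Icc 0 T) with hD
  have hDcount : D.Countable := (Set.Countable.mono Set.inter_subset_left
    (Set.countable_range _)).insert T
  have hDsub : D ⊆ Set.Icc 0 T := by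
    rw [hD]
    intro x hx
    rcases hx with rfl | hx
    · exact ⟨hT.le, le_refl _⟩
    · exact hx.2
  have hDne : D.Nonempty := ⟨T, Set.mem_insert _ _⟩
  obtain ⟨f, hf⟩ := hDcount.exists_eq_range hDne
  have hfD : ∀ k, f k ∈ D := fun k => hf ▸ Set.mem_range_self k
  -- finite grid bound
  have hfin : ∀ s : Finset ℝ, ↑s ⊆ Set.Icc (0:ℝ) T →
      pstar * ℙ (⋃ t ∈ s, {ω : Ω | ∀ i, u < W i (t ^ (2 * H i)) ω - c i * t}) ≤
        ℙ {ω : Ω | ∀ i, u < W i (T ^ (2 * H i)) ω - c i * T} := by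
    intro s hs
    have hkey := aux_grid W hW hWindep H h2H c T hT u s.card
      (fun j => ((s.orderIsoOfFin rfl j : s) : ℝ))
      (fun a b hab => Subtype.coe_le_coe.mpr ((s.orderIsoOfFin rfl).monotone hab))
      (fun j => hs (s.orderIsoOfFin rfl j).2)
    have hseteq : (⋃ t ∈ s, {ω : Ω | ∀ i, u < W i (t ^ (2 * H i)) ω - c i * t})
        = ⋃ j, {ω : Ω | ∀ i, u <
            W i (((s.orderIsoOfFin rfl j : s) : ℝ) ^ (2 * H i)) ω
              - c i * ((s.orderIsoOfFin rfl j : s) : ℝ)} := by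
      apply Set.Subset.antisymm
      · intro ω hω
        rw [Set.mem_iUnion₂] at hω
        obtain ⟨t, ht, hωt⟩ := hω
        have hexj : ∃ j, ((s.orderIsoOfFin rfl j : s) : ℝ) = t := by
          refine ⟨(s.orderIsoOfFin rfl).symm ⟨t, ht⟩, ?_⟩
          rw [OrderIso.apply_symm_apply]
        obtain ⟨j, hj⟩ := hexj
        rw [Set.mem_iUnion]
        exact ⟨j, by rw [hj]; exact hωt⟩
      · intro ω hω
        rw [Set.mem_iUnion] at hω
        obtain ⟨j, hωj⟩ := hω
        rw [Set.mem_iUnion₂]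
        exact ⟨_, (s.orderIsoOfFin rfl j).2, hωj⟩
    rw [← hseteq] at hkey
    exact hkey
  -- continuity null set
  have hcont : ∀ᵐ ω ∂(ℙ : Measure Ω), ∀ i, Continuous fun t => W i t ω :=
    ae_all_iff.mpr (fun i => (hW i).2.2.1)
  have hNbad : ℙ {ω : Ω | ¬ ∀ i, Continuous fun t => W i t ω} = 0 := ae_iff.mp hcont
  -- inclusion into countable union
  have hsubset : {ω : Ω | ∃ t ∈ Set.Icc (0:ℝ) T, ∀ i, u < W i (t ^ (2 * H i)) ω - c i * t}
      ⊆ (⋃ k : ℕ, {ω : Ω | ∀ i, u < W i ((f k) ^ (2 * H i)) ω - c i * (f k)}) ∪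
        {ω : Ω | ¬ ∀ i, Continuous fun t => W i t ω} := by
    intro ω hω
    by_cases hωc : ∀ i, Continuous fun t => W i t ω
    case neg => exact Or.inr hωc
    left
    obtain ⟨t0, ht0, hall⟩ := hω
    have hopen : IsOpen {t : ℝ | ∀ i, u < W i (t ^ (2 * H i)) ω - c i * t} := by
      rw [Set.setOf_forall]
      refine isOpen_iInter_of_finite (fun i => ?_)
      have hcomp : Continuous fun t : ℝ => W i (t ^ (2 * H i)) ω - c i * t := by
        refine Continuous.sub ?_ (continuous_const.mul continuous_id)
        exact (hωc i).comp (Real.continuous_rpow_const (by linarith [h2H i]))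
      exact isOpen_lt continuous_const hcomp
    have hex : ∃ q ∈ D, ∀ i, u < W i (q ^ (2 * H i)) ω - c i * q := by
      rcases eq_or_lt_of_le ht0.2 with heq | hlt
      · refine ⟨T, Set.mem_insert _ _, ?_⟩
        rw [← heq]
        exact hall
      · obtain ⟨δ, hδ, hball⟩ := Metric.isOpen_iff.mp hopen t0 hall
        have hlt2 : t0 < min (t0 + δ) T := lt_min (by linarith) hlt
        obtain ⟨q, hq1, hq2⟩ := exists_rat_btwn hlt2
        have hq2' : (q:ℝ) < t0 + δ := lt_of_lt_of_le hq2 (min_le_left _ _)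
        have hq2T : (q:ℝ) < T := lt_of_lt_of_le hq2 (min_le_right _ _)
        refine ⟨(q:ℝ), ?_, ?_⟩
        · refine Set.mem_insert_iff.mpr (Or.inr ⟨⟨q, rfl⟩, ⟨?_, hq2T.le⟩⟩)
          linarith [ht0.1]
        · refine hball ?_
          rw [Metric.mem_ball, Real.dist_eq, abs_sub_lt_iff]
          constructor <;> linarith
    obtain ⟨q, hqD, hq⟩ := hex
    rw [hf] at hqD
    obtain ⟨k, hk⟩ := hqD
    rw [Set.mem_iUnion]
    exact ⟨k, by rw [hk]; exact hq⟩
  -- increasing approximation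
  set A : ℕ → Set Ω := fun nn => ⋃ t ∈ (Finset.range (nn+1)).image f,
    {ω : Ω | ∀ i, u < W i (t ^ (2 * H i)) ω - c i * t} with hA
  have hAmono : Monotone A := by
    intro a b hab ω hω
    simp only [hA, Set.mem_iUnion] at hω ⊢
    obtain ⟨t, ht, hωt⟩ := hω
    exact ⟨t, Finset.image_subset_image (Finset.range_subset_range.mpr (by omega)) ht, hωt⟩
  have hAcup : (⋃ k : ℕ, {ω : Ω | ∀ i, u < W i ((f k) ^ (2 * H i)) ω - c i * (f k)})
      = ⋃ nn, A nn := by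
    apply Set.Subset.antisymm
    · intro ω hω
      rw [Set.mem_iUnion] at hω
      obtain ⟨k, hk⟩ := hω
      refine Set.mem_iUnion.mpr ⟨k, ?_⟩
      simp only [hA, Set.mem_iUnion]
      exact ⟨f k, Finset.mem_image_of_mem f (Finset.mem_range.mpr (by omega)), hk⟩
    · intro ω hω
      rw [Set.mem_iUnion] at hω
      obtain ⟨nn, hnn⟩ := hω
      simp only [hA, Set.mem_iUnion] at hnn
      obtain ⟨t, ht, hωt⟩ := hnn
      obtain ⟨k, _, hk⟩ := Finset.mem_image.mp ht
      exact Set.mem_iUnion.mpr ⟨k, by rw [hk]; exact hωt⟩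
  have hAbound : ∀ nn, ℙ (A nn) ≤
      pstar⁻¹ * ℙ {ω : Ω | ∀ i, u < W i (T ^ (2 * H i)) ω - c i * T} := by
    intro nn
    have hsub' : ↑((Finset.range (nn+1)).image f) ⊆ Set.Icc (0:ℝ) T := by
      intro x hx
      simp only [Finset.coe_image, Set.mem_image, Finset.mem_coe, Finset.mem_range] at hx
      obtain ⟨k, _, rfl⟩ := hx
      exact hDsub (hfD k)
    have h1 := hfin _ hsub'
    calc ℙ (A nn) = pstar⁻¹ * (pstar * ℙ (A nn)) := by
          rw [← mul_assoc, ENNReal.inv_mul_cancel hp0 hptop, one_mul]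
      _ ≤ pstar⁻¹ * ℙ {ω : Ω | ∀ i, u < W i (T ^ (2 * H i)) ω - c i * T} :=
          mul_le_mul_right h1 _
  calc ℙ {ω : Ω | ∃ t ∈ Set.Icc (0:ℝ) T, ∀ i, u < W i (t ^ (2 * H i)) ω - c i * t}
      ≤ ℙ ((⋃ k : ℕ, {ω : Ω | ∀ i, u < W i ((f k) ^ (2 * H i)) ω - c i * (f k)}) ∪
          {ω : Ω | ¬ ∀ i, Continuous fun t => W i t ω}) := measure_mono hsubset
    _ ≤ ℙ (⋃ k : ℕ, {ω : Ω | ∀ i, u < W i ((f k) ^ (2 * H i)) ω - c i * (f k)}) +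
          ℙ {ω : Ω | ¬ ∀ i, Continuous fun t => W i t ω} := measure_union_le _ _
    _ = ℙ (⋃ nn, A nn) := by rw [hNbad, add_zero, hAcup]
    _ = ⨆ nn, ℙ (A nn) := hAmono.directed_le.measure_iUnion
    _ ≤ pstar⁻¹ * ℙ {ω : Ω | ∀ i, u < W i (T ^ (2 * H i)) ω - c i * T} := iSup_le hAbound
end
end
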